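/- If A² ∈ (8/9, 1), then the two points ((-λA² ∓ λA√(9A²-8))/2, 0) are real, distinct critical points of the function f from the previous context. -/

import Mathlib

/-- The polynomial `f` with parameters `A`, `λ`. -/
noncomputable def f (A lam x y : ℝ) : ℝ :=
  (1 / 4) * x ^ 4 - (1 / 2) * A * x ^ 2 * y ^ 2 + (1 / 4) * y ^ 4
    + (-2 * lam ^ 3 * A ^ 4 * (1 - A ^ 2)) * x
    + (1 / 2) * (lam ^ 2 * A ^ 2 * (2 - 3 * A ^ 2)) * x ^ 2
    + (1 / 2) * (A ^ 3 * (2 - A ^ 2) * lam ^ 2) * y ^ 2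
    + (-A * (1 - A ^ 2) * lam) * x * y ^ 2

theorem stmt_13 (A lam : ℝ) (hA : 8 / 9 < A ^ 2 ∧ A ^ 2 < 1) (hlam : 0 < lam) :
    ((-lam * A ^ 2 - lam * A * Real.sqrt (9 * A ^ 2 - 8)) / 2 ≠
      (-lam * A ^ 2 + lam * A * Real.sqrt (9 * A ^ 2 - 8)) / 2) ∧
    (∀ s : ℝ, s = (-lam * A ^ 2 - lam * A * Real.sqrt (9 * A ^ 2 - 8)) / 2 ∨
        s = (-lam * A ^ 2 + lam * A * Real.sqrt (9 * A ^ 2 - 8)) / 2 →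
      deriv (fun x => f A lam x 0) s = 0 ∧ deriv (fun y => f A lam s y) 0 = 0) := by
  obtain ⟨h1, h2⟩ := hA
  have hpos : (0:ℝ) < 9 * A ^ 2 - 8 := by nlinarith
  set t := Real.sqrt (9 * A ^ 2 - 8) with htdef
  have ht : t ^ 2 = 9 * A ^ 2 - 8 := Real.sq_sqrt hpos.le
  have htpos : 0 < t := Real.sqrt_pos.mpr hpos
  have hAne : A ≠ 0 := by
    intro h; rw [h] at h1; norm_num at h1
  constructor
  · intro h
    have : lam * A * t = 0 := by linarith [sub_eq_zero.mpr h, (by ring :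
      (-lam * A ^ 2 - lam * A * t) / 2 - (-lam * A ^ 2 + lam * A * t) / 2 = -(lam * A * t))]
    rcases mul_eq_zero.mp this with h' | h'
    · rcases mul_eq_zero.mp h' with h'' | h''
      · exact absurd h'' hlam.ne'
      · exact hAne h''
    · exact htpos.ne' h'
  · intro s hs
    constructor
    · have hd : deriv (fun x => f A lam x 0) s
          = s ^ 3 + (-2 * lam ^ 3 * A ^ 4 * (1 - A ^ 2))
            + (lam ^ 2 * A ^ 2 * (2 - 3 * A ^ 2)) * s := by
        have heq : (fun x => f A lam x 0) = fun x : ℝ =>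
            (1 / 4) * x ^ 4 + (-2 * lam ^ 3 * A ^ 4 * (1 - A ^ 2)) * x
              + (1 / 2) * (lam ^ 2 * A ^ 2 * (2 - 3 * A ^ 2)) * x ^ 2 := by
          funext x; simp only [f]; ring
        rw [heq]
        have H : HasDerivAt (fun x : ℝ =>
            (1 / 4) * x ^ 4 + (-2 * lam ^ 3 * A ^ 4 * (1 - A ^ 2)) * x
              + (1 / 2) * (lam ^ 2 * A ^ 2 * (2 - 3 * A ^ 2)) * x ^ 2)
            (s ^ 3 + (-2 * lam ^ 3 * A ^ 4 * (1 - A ^ 2))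
              + (lam ^ 2 * A ^ 2 * (2 - 3 * A ^ 2)) * s) s := by
          have h4 := (hasDerivAt_pow 4 s).const_mul (1/4 : ℝ)
          have hid := (hasDerivAt_id s).const_mul (-2 * lam ^ 3 * A ^ 4 * (1 - A ^ 2))
          have h2' := (hasDerivAt_pow 2 s).const_mul ((1 / 2) * (lam ^ 2 * A ^ 2 * (2 - 3 * A ^ 2)))
          have := (h4.add hid).add h2'
          refine this.congr_deriv ?_
          push_cast
          ring
        exact H.deriv
      rw [hd]
      rcases hs with rfl | rfl
      · linear_combination ((lam ^ 3 / 8) * (-A ^ 3 * t - 3 * A ^ 4)) * ht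
      · linear_combination ((lam ^ 3 / 8) * (A ^ 3 * t - 3 * A ^ 4)) * ht
    · have heq : (fun y => f A lam s y) = fun y : ℝ =>
          ((1 / 4) * s ^ 4 + (-2 * lam ^ 3 * A ^ 4 * (1 - A ^ 2)) * s
            + (1 / 2) * (lam ^ 2 * A ^ 2 * (2 - 3 * A ^ 2)) * s ^ 2)
          + ((- (1 / 2) * A * s ^ 2 + (1 / 2) * (A ^ 3 * (2 - A ^ 2) * lam ^ 2)
            + (-A * (1 - A ^ 2) * lam) * s)) * y ^ 2 + (1 / 4) * y ^ 4 := by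
        funext y; simp only [f]; ring
      rw [heq]
      have H : HasDerivAt (fun y : ℝ =>
          ((1 / 4) * s ^ 4 + (-2 * lam ^ 3 * A ^ 4 * (1 - A ^ 2)) * s
            + (1 / 2) * (lam ^ 2 * A ^ 2 * (2 - 3 * A ^ 2)) * s ^ 2)
          + ((- (1 / 2) * A * s ^ 2 + (1 / 2) * (A ^ 3 * (2 - A ^ 2) * lam ^ 2)
            + (-A * (1 - A ^ 2) * lam) * s)) * y ^ 2 + (1 / 4) * y ^ 4) 0 0 := by
        have hc := hasDerivAt_const (0:ℝ) ((1 / 4) * s ^ 4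
          + (-2 * lam ^ 3 * A ^ 4 * (1 - A ^ 2)) * s
          + (1 / 2) * (lam ^ 2 * A ^ 2 * (2 - 3 * A ^ 2)) * s ^ 2)
        have h2' := (hasDerivAt_pow 2 (0:ℝ)).const_mul ((- (1 / 2) * A * s ^ 2
          + (1 / 2) * (A ^ 3 * (2 - A ^ 2) * lam ^ 2) + (-A * (1 - A ^ 2) * lam) * s))
        have h4 := (hasDerivAt_pow 4 (0:ℝ)).const_mul (1/4 : ℝ)
        have := (hc.add h2').add h4
        refine this.congr_deriv ?_
        norm_num
      exact H.deriv
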